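/- If Q is a Besant quadrilateral (cyclic, not a parallelogram), then the Besant ellipse for Q is unique: any two non-circular ellipses inscribed in Q each having one focus at EP must coincide. -/

import Mathlib

open Set

noncomputable section

/-- Points of the ellipse with foci `f₁`, `f₂` and major-axis length `2*a`. -/
def EllipseSet (f₁ f₂ : ℂ) (a : ℝ) : Set ℂ := {z : ℂ | dist z f₁ + dist z f₂ = 2 * a}

/-- `E` is the (possibly circular) ellipse with foci `f₁, f₂` and semi-major axis `a`.
It is a circle precisely when `f₁ = f₂`. -/
def IsEllipse (E : Set ℂ) (f₁ f₂ : ℂ) (a : ℝ) : Prop :=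
  dist f₁ f₂ < 2 * a ∧ E = EllipseSet f₁ f₂ a

/-- The full line through `P` and `Q`. -/
def LineThrough (P Q : ℂ) : Set ℂ := {z : ℂ | ∃ θ : ℝ, z = P + θ • (Q - P)}

/-- `E` is tangent to the side `[P,Q]` at `ζ`: the line through `P` and `Q` meets `E`
in the single point `ζ`, which lies on the closed segment `[P,Q]`. -/
def TangentToSideAt (E : Set ℂ) (P Q ζ : ℂ) : Prop :=
  ζ ∈ segment ℝ P Q ∧ E ∩ LineThrough P Q = {ζ}

/-- `E` is tangent to the side `[P,Q]`. -/
def TangentToSide (E : Set ℂ) (P Q : ℂ) : Prop := ∃ ζ, TangentToSideAt E P Q ζ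

/-- A curve `E` is inscribed in the quadrilateral `A₁A₂A₃A₄` (vertices in order)
if it is tangent to each of the four sides. -/
def InscribedInQuad (E : Set ℂ) (A₁ A₂ A₃ A₄ : ℂ) : Prop :=
  TangentToSide E A₁ A₂ ∧ TangentToSide E A₂ A₃ ∧
    TangentToSide E A₃ A₄ ∧ TangentToSide E A₄ A₁

/-- `A₁A₂A₃A₄` is a convex quadrilateral with the vertices listed in cyclic order:
the four points are in convex position and the diagonals `A₁A₃`, `A₂A₄` meet. -/
def IsConvexQuad (A₁ A₂ A₃ A₄ : ℂ) : Prop :=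
  A₁ ∉ convexHull ℝ ({A₂, A₃, A₄} : Set ℂ) ∧
  A₂ ∉ convexHull ℝ ({A₁, A₃, A₄} : Set ℂ) ∧
  A₃ ∉ convexHull ℝ ({A₁, A₂, A₄} : Set ℂ) ∧
  A₄ ∉ convexHull ℝ ({A₁, A₂, A₃} : Set ℂ) ∧
  (segment ℝ A₁ A₃ ∩ segment ℝ A₂ A₄).Nonempty

def IsParallelogram (A₁ A₂ A₃ A₄ : ℂ) : Prop := A₁ + A₃ = A₂ + A₄

/-- The diagonals `A₁A₃` and `A₂A₄` are perpendicular. -/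
def Orthodiagonal (A₁ A₂ A₃ A₄ : ℂ) : Prop :=
  (A₃ - A₁).re * (A₄ - A₂).re + (A₃ - A₁).im * (A₄ - A₂).im = 0

/-- `P` is equidistant from the four points (the circumcenter, when they are concyclic). -/
def IsCircCenter (P A₁ A₂ A₃ A₄ : ℂ) : Prop :=
  dist P A₁ = dist P A₂ ∧ dist P A₂ = dist P A₃ ∧ dist P A₃ = dist P A₄

/-- `P` is the intersection point of the diagonals `A₁A₃` and `A₂A₄`. -/
def IsDiagPoint (P A₁ A₂ A₃ A₄ : ℂ) : Prop :=
  P ∈ segment ℝ A₁ A₃ ∧ P ∈ segment ℝ A₂ A₄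

/-- The plane vectors `z` and `w` are parallel. -/
def Para (z w : ℂ) : Prop := z.re * w.im = z.im * w.re

/-- The quadrilateral `A₁A₂A₃A₄` has (at least) one pair of parallel opposite sides. -/
def IsTrapezoid (A₁ A₂ A₃ A₄ : ℂ) : Prop :=
  Para (A₂ - A₁) (A₄ - A₃) ∨ Para (A₃ - A₂) (A₁ - A₄)

lemma line_mem_iff (P Q z : ℂ) (hd : Q - P ≠ 0) :
    z ∈ LineThrough P Q ↔ ((z - P) / (Q - P)).im = 0 := by
  constructor
  · rintro ⟨θ, rfl⟩
    rw [add_sub_cancel_left, Complex.real_smul, mul_div_assoc, div_self hd, mul_one,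
      Complex.ofReal_im]
  · intro h
    refine ⟨((z - P) / (Q - P)).re, ?_⟩
    have : (((z - P) / (Q - P)).re : ℂ) = (z - P) / (Q - P) := by
      apply Complex.ext <;> simp [h]
    rw [Complex.real_smul, this, div_mul_cancel₀ _ hd]
    ring

lemma line_lower_bound (p q P Q ζ : ℂ) (a : ℝ) (hd : Q - P ≠ 0)
    (hE : EllipseSet p q a ∩ LineThrough P Q = {ζ}) :
    ∀ z ∈ LineThrough P Q, 2 * a ≤ dist z p + dist z q := by
  have habs : (0:ℝ) < ‖Q - P‖ := by simpa using hd
  intro z hz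
  by_contra hltc
  push_neg at hltc
  obtain ⟨θ₀, rfl⟩ := hz
  have hcont : Continuous (fun θ : ℝ => dist (P + θ • (Q - P)) p + dist (P + θ • (Q - P)) q) := by
    fun_prop
  have hgrow : ∀ θ : ℝ, |θ| * ‖Q - P‖ - dist P p ≤
      dist (P + θ • (Q - P)) p + dist (P + θ • (Q - P)) q := by
    intro θ
    have h1 : dist (P + θ • (Q - P)) P ≤ dist (P + θ • (Q - P)) p + dist P p := by
      have := dist_triangle (P + θ • (Q - P)) p P
      rw [dist_comm p P] at this; linarith
    have h2 : dist (P + θ • (Q - P)) P = |θ| * ‖Q - P‖ := by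
      rw [dist_eq_norm, add_sub_cancel_left, norm_smul, Real.norm_eq_abs]
    linarith [dist_nonneg (x := P + θ • (Q - P)) (y := q)]
  obtain ⟨T, hT1, hT2⟩ : ∃ T : ℝ, |θ₀| < T ∧ 2 * a + dist P p ≤ T * ‖Q - P‖ := by
    refine ⟨(|2 * a| + dist P p) / ‖Q - P‖ + |θ₀| + 1, ?_, ?_⟩
    · have : (0:ℝ) ≤ (|2 * a| + dist P p) / ‖Q - P‖ :=
        div_nonneg (by positivity) habs.le
      linarith
    · have h0 : (|2 * a| + dist P p) / ‖Q - P‖ * ‖Q - P‖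
          = |2 * a| + dist P p := div_mul_cancel₀ _ habs.ne'
      nlinarith [le_abs_self (2 * a), abs_nonneg θ₀]
  have hTval : 2 * a ≤ dist (P + T • (Q - P)) p + dist (P + T • (Q - P)) q := by
    have := hgrow T
    rw [abs_of_pos (lt_of_le_of_lt (abs_nonneg θ₀) hT1)] at this
    linarith [dist_nonneg (x := P) (y := p)]
  have hTval' : 2 * a ≤ dist (P + (-T) • (Q - P)) p + dist (P + (-T) • (Q - P)) q := by
    have := hgrow (-T)
    rw [abs_neg, abs_of_pos (lt_of_le_of_lt (abs_nonneg θ₀) hT1)] at this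
    linarith [dist_nonneg (x := P) (y := p)]
  obtain ⟨θ₁, hθ₁, hv₁⟩ : ∃ θ₁ ∈ Icc (-T) θ₀,
      dist (P + θ₁ • (Q - P)) p + dist (P + θ₁ • (Q - P)) q = 2 * a := by
    have hle : -T ≤ θ₀ := by linarith [neg_abs_le θ₀]
    exact intermediate_value_Icc' hle hcont.continuousOn ⟨hltc.le, hTval'⟩
  obtain ⟨θ₂, hθ₂, hv₂⟩ : ∃ θ₂ ∈ Icc θ₀ T,
      dist (P + θ₂ • (Q - P)) p + dist (P + θ₂ • (Q - P)) q = 2 * a := by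
    have hle : θ₀ ≤ T := by linarith [le_abs_self θ₀]
    exact intermediate_value_Icc hle hcont.continuousOn ⟨hltc.le, hTval⟩
  have hne1 : θ₁ ≠ θ₀ := by rintro rfl; linarith
  have hne2 : θ₂ ≠ θ₀ := by rintro rfl; linarith
  have hne : θ₁ ≠ θ₂ := by
    intro h
    exact hne1 (le_antisymm hθ₁.2 (h ▸ hθ₂.1))
  have hz₁ : P + θ₁ • (Q - P) ∈ EllipseSet p q a ∩ LineThrough P Q := ⟨hv₁, θ₁, rfl⟩
  have hz₂ : P + θ₂ • (Q - P) ∈ EllipseSet p q a ∩ LineThrough P Q := ⟨hv₂, θ₂, rfl⟩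
  rw [hE, mem_singleton_iff] at hz₁ hz₂
  have heq : (θ₁ : ℂ) * (Q - P) = (θ₂ : ℂ) * (Q - P) := by
    have h := hz₁.trans hz₂.symm
    rw [Complex.real_smul, Complex.real_smul] at h
    linear_combination h
  have : (θ₁ : ℂ) = θ₂ := mul_right_cancel₀ hd heq
  exact hne (by exact_mod_cast this)


lemma seg_cross (P Q x y : ℂ) (hd : Q - P ≠ 0)
    (h : ((x - P) / (Q - P)).im * ((y - P) / (Q - P)).im ≤ 0) :
    ∃ w ∈ segment ℝ x y, w ∈ LineThrough P Q := by
  set α := ((x - P) / (Q - P)).im with hα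
  set β := ((y - P) / (Q - P)).im with hβ
  rcases eq_or_ne α 0 with h0 | h0
  · exact ⟨x, left_mem_segment ℝ x y, (line_mem_iff P Q x hd).2 h0⟩
  rcases eq_or_ne β 0 with h1 | h1
  · exact ⟨y, right_mem_segment ℝ x y, (line_mem_iff P Q y hd).2 h1⟩
  have hprod : α * β < 0 := lt_of_le_of_ne h (mul_ne_zero h0 h1)
  set t := α / (α - β) with ht
  have htb : 0 ≤ t ∧ t ≤ 1 := by
    rcases lt_or_gt_of_ne h0 with hav | hav
    · have hbv : 0 < β := by nlinarith
      have hteq : t = -α / (β - α) := by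
        rw [ht, show α - β = -(β - α) by ring, div_neg, ← neg_div]
      constructor
      · rw [hteq]; exact div_nonneg (by linarith) (by linarith)
      · rw [hteq]; exact (div_le_one (by linarith)).2 (by linarith)
    · have hbv : β < 0 := by nlinarith
      constructor
      · rw [ht]; exact div_nonneg (by linarith) (by linarith)
      · rw [ht]; exact (div_le_one (by linarith)).2 (by linarith)
  refine ⟨(1 - t) • x + t • y, ⟨1 - t, t, by linarith [htb.2], htb.1, by ring, rfl⟩, ?_⟩
  rw [line_mem_iff _ _ _ hd]
  have hrw : (1 - t) • x + t • y - P = ((1 - t : ℝ) : ℂ) * (x - P) + ((t : ℝ) : ℂ) * (y - P) := by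
    rw [Complex.real_smul, Complex.real_smul]
    push_cast
    ring
  rw [hrw, add_div, mul_div_assoc, mul_div_assoc, Complex.add_im,
    Complex.im_ofReal_mul, Complex.im_ofReal_mul, ← hα, ← hβ]
  have hne : α - β ≠ 0 := by
    intro hc
    have hab : α = β := by linarith
    rw [hab] at hprod
    nlinarith [mul_self_nonneg β]
  field_simp [ht]
  have key : t * (α - β) = α := by rw [ht]; exact div_mul_cancel₀ α hne
  linear_combination -key

lemma refl_dist (P Q p z : ℂ) (hd : Q - P ≠ 0) (hz : z ∈ LineThrough P Q) :
    dist z (P + (starRingEnd ℂ) ((p - P) / (Q - P)) * (Q - P)) = dist z p := by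
  obtain ⟨θ, rfl⟩ := hz
  rw [Complex.dist_eq, Complex.dist_eq]
  have h1 : P + θ • (Q - P) - (P + (starRingEnd ℂ) ((p - P) / (Q - P)) * (Q - P))
      = ((θ : ℂ) - (starRingEnd ℂ) ((p - P) / (Q - P))) * (Q - P) := by
    rw [Complex.real_smul]; ring
  have h2 : P + θ • (Q - P) - p = ((θ : ℂ) - (p - P) / (Q - P)) * (Q - P) := by
    rw [Complex.real_smul, sub_mul, div_mul_cancel₀ _ hd]
    ring
  rw [h1, h2, norm_mul, norm_mul]
  congr 1
  have : (θ : ℂ) - (starRingEnd ℂ) ((p - P) / (Q - P))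
      = (starRingEnd ℂ) ((θ : ℂ) - (p - P) / (Q - P)) := by
    rw [map_sub, Complex.conj_ofReal]
  rw [this, Complex.norm_conj]

lemma key_reflect (p q P Q ζ : ℂ) (a : ℝ) (hd : Q - P ≠ 0) (hlt : dist p q < 2 * a)
    (hE : EllipseSet p q a ∩ LineThrough P Q = {ζ}) :
    dist (P + (starRingEnd ℂ) ((p - P) / (Q - P)) * (Q - P)) q = 2 * a := by
  have H := line_lower_bound p q P Q ζ a hd hE
  have hζ : ζ ∈ EllipseSet p q a ∩ LineThrough P Q := by rw [hE]; exact rfl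
  obtain ⟨hζE, hζL⟩ := hζ
  set r := P + (starRingEnd ℂ) ((p - P) / (Q - P)) * (Q - P) with hr
  have hpnot : ((p - P) / (Q - P)).im ≠ 0 := by
    intro h0
    have hp : p ∈ LineThrough P Q := (line_mem_iff P Q p hd).2 h0
    have := H p hp
    rw [dist_self] at this
    linarith
  have hqnot : ((q - P) / (Q - P)).im ≠ 0 := by
    intro h0
    have hq : q ∈ LineThrough P Q := (line_mem_iff P Q q hd).2 h0
    have := H q hq
    rw [dist_self, dist_comm q p] at this
    linarith
  have hsame : 0 < ((p - P) / (Q - P)).im * ((q - P) / (Q - P)).im := by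
    rcases lt_or_ge 0 (((p - P) / (Q - P)).im * ((q - P) / (Q - P)).im) with h | h
    · exact h
    exfalso
    obtain ⟨w, hw1, hw2⟩ := seg_cross P Q p q hd h
    have h3 := H w hw2
    have h4 := dist_add_dist_of_mem_segment hw1
    rw [dist_comm p w] at h4
    linarith
  have hrℓ : ((r - P) / (Q - P)).im = -((p - P) / (Q - P)).im := by
    rw [hr]
    have heq : P + (starRingEnd ℂ) ((p - P) / (Q - P)) * (Q - P) - P
        = (starRingEnd ℂ) ((p - P) / (Q - P)) * (Q - P) := by ring
    rw [heq, mul_div_assoc, div_self hd, mul_one, Complex.conj_im]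
  have hopp : ((r - P) / (Q - P)).im * ((q - P) / (Q - P)).im ≤ 0 := by
    rw [hrℓ]; nlinarith
  obtain ⟨w, hw1, hw2⟩ := seg_cross P Q r q hd hopp
  have hcross : dist r w + dist w q = dist r q := dist_add_dist_of_mem_segment hw1
  have hwr : dist w r = dist w p := refl_dist P Q p w hd hw2
  have hlb : 2 * a ≤ dist r q := by
    have := H w hw2
    rw [dist_comm r w, hwr] at hcross
    linarith
  have hub : dist r q ≤ 2 * a := by
    have h1 : dist r q ≤ dist r ζ + dist ζ q := dist_triangle r ζ q
    have h2 : dist r ζ = dist ζ p := by rw [dist_comm]; exact refl_dist P Q p ζ hd hζL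
    have h3 : dist ζ p + dist ζ q = 2 * a := hζE
    linarith
  linarith

lemma EllipseSet_symm (p q : ℂ) (a : ℝ) : EllipseSet p q a = EllipseSet q p a := by
  ext z
  simp only [EllipseSet, mem_setOf_eq]
  constructor <;> intro h <;> linarith

lemma refl_circ (P Q EP : ℂ) (hd : Q - P ≠ 0) (h : dist EP P = dist EP Q) :
    P + (starRingEnd ℂ) ((EP - P) / (Q - P)) * (Q - P) = P + Q - EP := by
  set u := (EP - P) / (Q - P) with hu
  have hre : u.re = 1/2 := by
    have h1 : ‖EP - P‖ = ‖EP - Q‖ := by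
      rw [← Complex.dist_eq, ← Complex.dist_eq]; exact h
    have h2 : EP - P = u * (Q - P) := (div_mul_cancel₀ _ hd).symm
    have h3 : EP - Q = (u - 1) * (Q - P) := by rw [sub_mul, one_mul, ← h2]; ring
    rw [h2, h3, norm_mul, norm_mul] at h1
    have h4 : ‖u‖ = ‖u - 1‖ :=
      mul_right_cancel₀ (norm_ne_zero_iff.mpr hd) h1
    have h5 : Complex.normSq u = Complex.normSq (u - 1) := by
      rw [← Complex.sq_norm, ← Complex.sq_norm, h4]
    simp only [Complex.normSq_apply, Complex.sub_re, Complex.sub_im, Complex.one_re,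
      Complex.one_im] at h5
    nlinarith [h5]
  have hconj : (starRingEnd ℂ) u = 1 - u := by
    apply Complex.ext
    · simp [Complex.sub_re, hre]; norm_num
    · simp
  rw [hconj, sub_mul, one_mul, hu, div_mul_cancel₀ _ hd]
  ring

lemma quad_facts (A₁ A₂ A₃ A₄ : ℂ) (hconv : IsConvexQuad A₁ A₂ A₃ A₄) :
    A₂ - A₁ ≠ 0 ∧ A₃ - A₂ ≠ 0 ∧ A₄ - A₃ ≠ 0 ∧ A₁ - A₄ ≠ 0 ∧
    (A₁.re - A₃.re) * (A₂.im - A₄.im) - (A₁.im - A₃.im) * (A₂.re - A₄.re) ≠ 0 := by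
  obtain ⟨hc1, hc2, hc3, hc4, hX⟩ := hconv
  refine ⟨?_, ?_, ?_, ?_, ?_⟩
  · intro h
    have he : A₁ = A₂ := (sub_eq_zero.mp h).symm
    exact hc1 (subset_convexHull ℝ _ (by rw [he]; simp))
  · intro h
    have he : A₂ = A₃ := (sub_eq_zero.mp h).symm
    exact hc2 (subset_convexHull ℝ _ (by rw [he]; simp))
  · intro h
    have he : A₃ = A₄ := (sub_eq_zero.mp h).symm
    exact hc3 (subset_convexHull ℝ _ (by rw [he]; simp))
  · intro h
    have he : A₄ = A₁ := (sub_eq_zero.mp h).symm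
    exact hc4 (subset_convexHull ℝ _ (by rw [he]; simp))
  · intro h0
    have he13 : A₃ - A₁ ≠ 0 := by
      intro h
      have he : A₁ = A₃ := (sub_eq_zero.mp h).symm
      exact hc1 (subset_convexHull ℝ _ (by rw [he]; simp))
    have he24 : A₄ - A₂ ≠ 0 := by
      intro h
      have he : A₂ = A₄ := (sub_eq_zero.mp h).symm
      exact hc2 (subset_convexHull ℝ _ (by rw [he]; simp))
    have hn : 0 < (A₃.re - A₁.re) ^ 2 + (A₃.im - A₁.im) ^ 2 := by
      have := Complex.normSq_pos.mpr he13
      rw [Complex.normSq_apply, Complex.sub_re, Complex.sub_im] at this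
      nlinarith
    obtain ⟨c, hc⟩ : ∃ c : ℝ, A₄ - A₂ = (c : ℂ) * (A₃ - A₁) := by
      refine ⟨((A₄.re - A₂.re) * (A₃.re - A₁.re) + (A₄.im - A₂.im) * (A₃.im - A₁.im)) /
        ((A₃.re - A₁.re) ^ 2 + (A₃.im - A₁.im) ^ 2), ?_⟩
      apply Complex.ext
      · simp only [Complex.sub_re, Complex.mul_re, Complex.ofReal_re, Complex.ofReal_im,
          zero_mul, sub_zero]
        rw [div_mul_eq_mul_div, eq_div_iff hn.ne']
        linear_combination (A₁.im - A₃.im) * h0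
      · simp only [Complex.sub_im, Complex.mul_im, Complex.ofReal_re, Complex.ofReal_im,
          zero_mul, add_zero]
        rw [div_mul_eq_mul_div, eq_div_iff hn.ne']
        linear_combination (A₃.re - A₁.re) * h0
    obtain ⟨X, hX1, hX2⟩ := hX
    obtain ⟨u₁, v₁, hu₁, hv₁, huv₁, hXe₁⟩ := hX1
    obtain ⟨u₂, v₂, hu₂, hv₂, huv₂, hXe₂⟩ := hX2
    have hX1' : X = A₁ + (v₁ : ℂ) * (A₃ - A₁) := by
      rw [← hXe₁, Complex.real_smul, Complex.real_smul]
      have huu : u₁ = 1 - v₁ := by linarith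
      rw [huu]; push_cast; ring
    have hX2' : X = A₂ + (v₂ : ℂ) * ((c : ℂ) * (A₃ - A₁)) := by
      rw [← hXe₂, Complex.real_smul, Complex.real_smul, ← hc]
      have huu : u₂ = 1 - v₂ := by linarith
      rw [huu]; push_cast; ring
    obtain ⟨r, hA2, hA4⟩ : ∃ r : ℝ, A₂ = A₁ + (r : ℂ) * (A₃ - A₁) ∧
        A₄ = A₁ + ((r + c : ℝ) : ℂ) * (A₃ - A₁) := by
      refine ⟨v₁ - v₂ * c, ?_, ?_⟩
      · push_cast
        linear_combination -(hX1'.symm.trans hX2')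
      · push_cast
        linear_combination hc - (hX1'.symm.trans hX2')
    have hA3 : A₃ = A₁ + (A₃ - A₁) := by ring
    rcases le_or_gt r 0 with hr | hr
    · apply hc1
      apply segment_subset_convexHull (show A₂ ∈ ({A₂, A₃, A₄} : Set ℂ) by simp)
        (show A₃ ∈ ({A₂, A₃, A₄} : Set ℂ) by simp)
      have h1r : (0:ℝ) < 1 - r := by linarith
      refine ⟨1/(1-r), -r/(1-r), by positivity, div_nonneg (by linarith) h1r.le, ?_, ?_⟩
      · field_simp
        ring
      · rw [Complex.real_smul, Complex.real_smul]
        nth_rewrite 1 [hA2]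
        nth_rewrite 1 [hA3]
        have h1rc : (1 : ℂ) - (r : ℂ) ≠ 0 := by
          have h' : ((1 - r : ℝ) : ℂ) ≠ 0 := by exact_mod_cast h1r.ne'
          push_cast at h'
          exact h'
        push_cast
        field_simp
        ring
    · rcases le_or_gt r 1 with hr1 | hr1
      · apply hc2
        apply segment_subset_convexHull (show A₁ ∈ ({A₁, A₃, A₄} : Set ℂ) by simp)
          (show A₃ ∈ ({A₁, A₃, A₄} : Set ℂ) by simp)
        refine ⟨1 - r, r, by linarith, hr.le, by ring, ?_⟩
        rw [Complex.real_smul, Complex.real_smul]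
        push_cast
        linear_combination -hA2
      · apply hc3
        apply segment_subset_convexHull (show A₁ ∈ ({A₁, A₂, A₄} : Set ℂ) by simp)
          (show A₂ ∈ ({A₁, A₂, A₄} : Set ℂ) by simp)
        have hrpos : (0:ℝ) < r := by linarith
        have hrc : ((r : ℝ) : ℂ) ≠ 0 := by exact_mod_cast hrpos.ne'
        refine ⟨1 - 1/r, 1/r, by
          have h1 : 1/r ≤ 1 := by rw [div_le_one hrpos]; linarith
          linarith, by positivity, by ring, ?_⟩
        rw [Complex.real_smul, Complex.real_smul]
        nth_rewrite 1 [hA2]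
        push_cast
        field_simp
        ring

/-- The Besant ellipse of a Besant quadrilateral is unique: two
non-circular ellipses inscribed in a cyclic convex quadrilateral (not a parallelogram),
each having a focus at the circumcenter `EP`, coincide. -/
theorem besant_ellipse_unique
    (A₁ A₂ A₃ A₄ EP : ℂ)
    (hconv : IsConvexQuad A₁ A₂ A₃ A₄)
    (hEP : IsCircCenter EP A₁ A₂ A₃ A₄)
    (hnp : ¬ IsParallelogram A₁ A₂ A₃ A₄)
    (E₁ E₂ : Set ℂ) (f₁ f₂ g₁ g₂ : ℂ) (a b : ℝ)
    (hE₁ : IsEllipse E₁ f₁ f₂ a) (hnc₁ : f₁ ≠ f₂)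
    (hins₁ : InscribedInQuad E₁ A₁ A₂ A₃ A₄) (hfoc₁ : f₁ = EP ∨ f₂ = EP)
    (hE₂ : IsEllipse E₂ g₁ g₂ b) (hnc₂ : g₁ ≠ g₂)
    (hins₂ : InscribedInQuad E₂ A₁ A₂ A₃ A₄) (hfoc₂ : g₁ = EP ∨ g₂ = EP) :
    E₁ = E₂ := by
  obtain ⟨h12, h23, h34, h41, hcross⟩ := quad_facts A₁ A₂ A₃ A₄ hconv
  obtain ⟨hd1, hd2, hd3⟩ := hEP
  obtain ⟨F, hFd, hFset⟩ : ∃ F, dist EP F < 2 * a ∧ E₁ = EllipseSet EP F a := by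
    rcases hfoc₁ with h | h
    · exact ⟨f₂, by rw [← h]; exact hE₁.1, by rw [hE₁.2, h]⟩
    · exact ⟨f₁, by rw [← h, dist_comm]; exact hE₁.1, by rw [hE₁.2, h, EllipseSet_symm]⟩
  obtain ⟨G, hGd, hGset⟩ : ∃ G, dist EP G < 2 * b ∧ E₂ = EllipseSet EP G b := by
    rcases hfoc₂ with h | h
    · exact ⟨g₂, by rw [← h]; exact hE₂.1, by rw [hE₂.2, h]⟩
    · exact ⟨g₁, by rw [← h, dist_comm]; exact hE₂.1, by rw [hE₂.2, h, EllipseSet_symm]⟩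
  have dR1 : dist (A₁ + A₂ - EP) F = 2 * a := by
    obtain ⟨ζ, hseg, heq⟩ := hins₁.1
    rw [hFset] at heq
    have h := key_reflect EP F A₁ A₂ ζ a h12 hFd heq
    rwa [refl_circ A₁ A₂ EP h12 hd1] at h
  have dR2 : dist (A₂ + A₃ - EP) F = 2 * a := by
    obtain ⟨ζ, hseg, heq⟩ := hins₁.2.1
    rw [hFset] at heq
    have h := key_reflect EP F A₂ A₃ ζ a h23 hFd heq
    rwa [refl_circ A₂ A₃ EP h23 hd2] at h
  have dR3 : dist (A₃ + A₄ - EP) F = 2 * a := by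
    obtain ⟨ζ, hseg, heq⟩ := hins₁.2.2.1
    rw [hFset] at heq
    have h := key_reflect EP F A₃ A₄ ζ a h34 hFd heq
    rwa [refl_circ A₃ A₄ EP h34 hd3] at h
  have dS1 : dist (A₁ + A₂ - EP) G = 2 * b := by
    obtain ⟨ζ, hseg, heq⟩ := hins₂.1
    rw [hGset] at heq
    have h := key_reflect EP G A₁ A₂ ζ b h12 hGd heq
    rwa [refl_circ A₁ A₂ EP h12 hd1] at h
  have dS2 : dist (A₂ + A₃ - EP) G = 2 * b := by
    obtain ⟨ζ, hseg, heq⟩ := hins₂.2.1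
    rw [hGset] at heq
    have h := key_reflect EP G A₂ A₃ ζ b h23 hGd heq
    rwa [refl_circ A₂ A₃ EP h23 hd2] at h
  have dS3 : dist (A₃ + A₄ - EP) G = 2 * b := by
    obtain ⟨ζ, hseg, heq⟩ := hins₂.2.2.1
    rw [hGset] at heq
    have h := key_reflect EP G A₃ A₄ ζ b h34 hGd heq
    rwa [refl_circ A₃ A₄ EP h34 hd3] at h
  have sq : ∀ (z w : ℂ) (t : ℝ), dist z w = 2 * t →
      (z.re - w.re) ^ 2 + (z.im - w.im) ^ 2 = (2 * t) ^ 2 := by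
    intro z w t h
    calc (z.re - w.re) ^ 2 + (z.im - w.im) ^ 2 = Complex.normSq (z - w) := by
          simp [Complex.normSq_apply, Complex.sub_re, Complex.sub_im]; ring
    _ = ‖z - w‖ ^ 2 := (Complex.sq_norm _).symm
    _ = (2 * t) ^ 2 := by rw [← Complex.dist_eq, h]
  have E1 := sq _ _ _ dR1
  have E2 := sq _ _ _ dR2
  have E3 := sq _ _ _ dR3
  have S1 := sq _ _ _ dS1
  have S2 := sq _ _ _ dS2
  have S3 := sq _ _ _ dS3
  simp only [Complex.add_re, Complex.sub_re, Complex.add_im, Complex.sub_im] at E1 E2 E3 S1 S2 S3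
  have hv : (A₁.re - A₃.re) * (G.re - F.re) + (A₁.im - A₃.im) * (G.im - F.im) = 0 := by
    linear_combination (E1 - E2 - S1 + S2) / 2
  have hw : (A₂.re - A₄.re) * (G.re - F.re) + (A₂.im - A₄.im) * (G.im - F.im) = 0 := by
    linear_combination (E2 - E3 - S2 + S3) / 2
  have h1 : (G.re - F.re) *
      ((A₁.re - A₃.re) * (A₂.im - A₄.im) - (A₁.im - A₃.im) * (A₂.re - A₄.re)) = 0 := by
    linear_combination (A₂.im - A₄.im) * hv - (A₁.im - A₃.im) * hw
  have h2 : (G.im - F.im) *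
      ((A₁.re - A₃.re) * (A₂.im - A₄.im) - (A₁.im - A₃.im) * (A₂.re - A₄.re)) = 0 := by
    linear_combination (A₁.re - A₃.re) * hw - (A₂.re - A₄.re) * hv
  have hre : G.re - F.re = 0 := by
    rcases mul_eq_zero.mp h1 with h | h
    · exact h
    · exact absurd h hcross
  have him : G.im - F.im = 0 := by
    rcases mul_eq_zero.mp h2 with h | h
    · exact h
    · exact absurd h hcross
  have hFG : F = G := Complex.ext (by linarith) (by linarith)
  have hab : a = b := by
    have h := dS1
    rw [← hFG] at h
    have h2 : (2:ℝ) * a = 2 * b := dR1.symm.trans h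
    linarith
  rw [hFset, hGset, hFG, hab]
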